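/- A finite simple graph G has no odd antiholes and no independent set of size 3 if and only if its vertex set can be partitioned into two cliques (with arbitrary edges between them). -/

import Mathlib

open SimpleGraph
open Fin.NatCast

namespace TwoCliquesAux

variable {V : Type*}

lemma exists_segment {G : SimpleGraph V} {u v : V} (p : G.Walk u v) :
    ∀ j i, i ≤ j → j ≤ p.length →
      ∃ q : G.Walk (p.getVert i) (p.getVert j), q.length = j - i := by
  intro j
  induction j with
  | zero =>
    intro i hi _
    obtain rfl : i = 0 := Nat.le_zero.mp hi
    exact ⟨SimpleGraph.Walk.nil, rfl⟩
  | succ j ih =>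
    intro i hi hj
    rcases eq_or_lt_of_le hi with rfl | h
    · exact ⟨SimpleGraph.Walk.nil, by simp⟩
    · have hij : i ≤ j := Nat.lt_succ_iff.mp h
      obtain ⟨q, hq⟩ := ih i hij (le_trans (Nat.le_succ j) hj)
      exact ⟨q.concat (p.adj_getVert_succ (lt_of_lt_of_le (Nat.lt_succ_self j) hj)),
        by rw [SimpleGraph.Walk.length_concat, hq]; omega⟩

lemma mod_helper {x n : ℕ} (h2 : 2 ≤ n) (hx : x < 2 * n) : x % n = 1 ↔ (x = 1 ∨ x = n + 1) := by
  rcases lt_or_ge x n with h | h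
  · rw [Nat.mod_eq_of_lt h]; omega
  · have : x % n = x - n := by
      rw [Nat.mod_eq_sub_mod h, Nat.mod_eq_of_lt (by omega)]
    rw [this]; omega

lemma fin_sub_val {n : ℕ} (h2 : 2 ≤ n) (a b : Fin n) :
    (b - a).val = 1 ↔ (b.val = a.val + 1 ∨ (a.val = n - 1 ∧ b.val = 0)) := by
  have ha := a.isLt
  have hb := b.isLt
  rw [Fin.sub_def]
  simp only [Fin.val_mk]
  rw [mod_helper h2 (by omega)]
  omega

/-- In a triangle-free graph with no (induced) odd cycles of length ≥ 5, there is no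
closed walk of odd length. -/
lemma no_odd_closed {H : SimpleGraph V}
    (htri : ∀ a b c : V, H.Adj a b → H.Adj a c → H.Adj b c → False)
    (hind : ∀ n : ℕ, 5 ≤ n → Odd n → IsEmpty (cycleGraph n ↪g H)) :
    ∀ (u : V) (p : H.Walk u u), ¬ Odd p.length := by
  by_contra hcon
  push_neg at hcon
  obtain ⟨u₀, p₀, hodd₀⟩ := hcon
  classical
  let P : ℕ → Prop := fun m => Odd m ∧ ∃ u : V, ∃ p : H.Walk u u, p.length = m
  have hP : ∃ m, P m := ⟨p₀.length, hodd₀, u₀, p₀, rfl⟩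
  set n := Nat.find hP with hn
  obtain ⟨hodd, u, p, hlen⟩ : P n := Nat.find_spec hP
  have hmin : ∀ m, Odd m → (∃ w : V, ∃ q : H.Walk w w, q.length = m) → n ≤ m := by
    intro m hm hq
    by_contra hlt
    exact Nat.find_min hP (by omega) ⟨hm, hq⟩
  -- segments
  have seg : ∀ i j, i ≤ j → j ≤ n →
      ∃ q : H.Walk (p.getVert i) (p.getVert j), q.length = j - i := by
    intro i j hij hj
    exact exists_segment p j i hij (by omega)
  have hgv0 : p.getVert 0 = u := p.getVert_zero
  have hgvn : p.getVert n = u := by rw [← hlen]; exact p.getVert_length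
  -- n is odd and at least 5
  have hn1 : n ≠ 1 := by
    intro h1
    have hadj := p.adj_getVert_succ (i := 0) (by omega)
    rw [hgv0] at hadj
    have h1' : p.getVert (0 + 1) = u := by
      have e : 0 + 1 = n := by omega
      rw [e]; exact hgvn
    rw [h1'] at hadj
    exact H.irrefl hadj
  have hn3 : n ≠ 3 := by
    intro h3
    have h01 := p.adj_getVert_succ (i := 0) (by omega)
    have h12 := p.adj_getVert_succ (i := 1) (by omega)
    have h23 := p.adj_getVert_succ (i := 2) (by omega)
    have h3' : p.getVert (2 + 1) = p.getVert 0 := by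
      have e : 2 + 1 = n := by omega
      rw [e, hgvn, hgv0]
    rw [h3'] at h23
    exact htri (p.getVert 0) (p.getVert 1) (p.getVert 2) h01 h23.symm h12
  have hn5 : 5 ≤ n := by
    have := Nat.odd_iff.mp hodd
    omega
  -- injectivity
  have hinj : ∀ i j, i < j → j < n → p.getVert i ≠ p.getVert j := by
    intro i j hij hjn heq
    obtain ⟨q1, hq1⟩ := seg i j (le_of_lt hij) (le_of_lt hjn)
    obtain ⟨q2, hq2⟩ := seg 0 i (Nat.zero_le _) (by omega)
    obtain ⟨q3, hq3⟩ := seg j n (le_of_lt hjn) le_rfl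
    -- closed walk of length j - i at getVert i
    have w1 : ∃ q : H.Walk (p.getVert i) (p.getVert i), q.length = j - i :=
      ⟨q1.copy rfl heq.symm, by simpa using hq1⟩
    -- closed walk of length n - (j - i) at u
    have w2 : ∃ q : H.Walk u u, q.length = i + (n - j) := by
      refine ⟨((q2.append (q3.copy heq.symm rfl)).copy hgv0 hgvn), ?_⟩
      simp [SimpleGraph.Walk.length_append, hq2, hq3]
    have hd1 : j - i < n := by omega
    have hd2 : i + (n - j) < n := by omega
    rw [Nat.odd_iff] at hodd
    have : (j - i) % 2 = 1 ∨ (i + (n - j)) % 2 = 1 := by omega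
    rcases this with h | h
    · have := hmin (j - i) (Nat.odd_iff.mpr h) ⟨_, w1⟩
      omega
    · have := hmin (i + (n - j)) (Nat.odd_iff.mpr h) ⟨_, w2⟩
      omega
  -- adjacency characterization
  have hadjc : ∀ i j, i < j → j < n → H.Adj (p.getVert i) (p.getVert j) →
      j - i = 1 ∨ j - i = n - 1 := by
    intro i j hij hjn hadj
    by_contra hcon2
    push_neg at hcon2
    have hd1 : 2 ≤ j - i := by omega
    have hd2 : j - i ≤ n - 2 := by omega
    obtain ⟨q1, hq1⟩ := seg i j (le_of_lt hij) (le_of_lt hjn)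
    obtain ⟨q2, hq2⟩ := seg 0 i (Nat.zero_le _) (by omega)
    obtain ⟨q3, hq3⟩ := seg j n (le_of_lt hjn) le_rfl
    have w1 : ∃ q : H.Walk (p.getVert i) (p.getVert i), q.length = (j - i) + 1 :=
      ⟨q1.concat hadj.symm, by rw [SimpleGraph.Walk.length_concat, hq1]⟩
    have w2 : ∃ q : H.Walk u u, q.length = i + (1 + (n - j)) := by
      refine ⟨(q2.append (SimpleGraph.Walk.cons hadj q3)).copy hgv0 hgvn, ?_⟩
      simp only [SimpleGraph.Walk.length_copy, SimpleGraph.Walk.length_append,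
        SimpleGraph.Walk.length_cons, hq2, hq3]
      omega
    rw [Nat.odd_iff] at hodd
    have : ((j - i) + 1) % 2 = 1 ∨ (i + (1 + (n - j))) % 2 = 1 := by omega
    rcases this with h | h
    · have := hmin _ (Nat.odd_iff.mpr h) ⟨_, w1⟩
      omega
    · have := hmin _ (Nat.odd_iff.mpr h) ⟨_, w2⟩
      omega
  -- adjacency construction
  have hadjmk : ∀ i, i < n → H.Adj (p.getVert i) (p.getVert ((i + 1) % n)) := by
    intro i hi
    rcases Nat.lt_or_ge (i + 1) n with h | h
    · rw [Nat.mod_eq_of_lt h]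
      exact p.adj_getVert_succ (by omega)
    · have hii : i + 1 = n := by omega
      have hz : (i + 1) % n = 0 := by rw [hii, Nat.mod_self]
      rw [hz]
      have e : p.getVert 0 = p.getVert n := by rw [hgv0, hgvn]
      rw [e]
      have hadj := p.adj_getVert_succ (i := i) (by omega)
      rwa [hii] at hadj
  -- build the embedding
  have h2 : 2 ≤ n := by omega
  let f : Fin n → V := fun i => p.getVert i.val
  have finj : Function.Injective f := by
    intro a b hab
    by_contra hne
    rcases lt_trichotomy a.val b.val with h | h | h
    · exact hinj a.val b.val h b.isLt hab
    · exact hne (Fin.ext h)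
    · exact hinj b.val a.val h a.isLt hab.symm
  have fadjmk : ∀ a b : Fin n, (b - a).val = 1 → H.Adj (f a) (f b) := by
    intro a b h1
    rw [fin_sub_val h2] at h1
    have hmod : (a.val + 1) % n = b.val := by
      rcases h1 with h1 | ⟨h1, h1'⟩
      · have hlt : a.val + 1 < n := by have := b.isLt; omega
        rw [h1, Nat.mod_eq_of_lt hlt]
      · have hii : a.val + 1 = n := by have := a.isLt; omega
        rw [hii, Nat.mod_self, h1']
    have hadj := hadjmk a.val a.isLt
    rw [hmod] at hadj
    exact hadj
  have fadj : ∀ a b : Fin n, H.Adj (f a) (f b) ↔ (cycleGraph n).Adj a b := by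
    intro a b
    rw [SimpleGraph.cycleGraph_adj']
    constructor
    · intro hadj
      rcases lt_trichotomy a.val b.val with h | h | h
      · rcases hadjc a.val b.val h b.isLt hadj with h1 | h1
        · right; rw [fin_sub_val h2]; left; omega
        · left; rw [fin_sub_val h2]; right
          have := a.isLt; have := b.isLt; omega
      · exfalso
        have : a = b := Fin.ext h
        rw [this] at hadj
        exact H.irrefl hadj
      · rcases hadjc b.val a.val h a.isLt hadj.symm with h1 | h1
        · left; rw [fin_sub_val h2]; left; omega
        · right; rw [fin_sub_val h2]; right
          have := a.isLt; have := b.isLt; omega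
    · intro hc
      rcases hc with h1 | h1
      · exact (fadjmk b a h1).symm
      · exact fadjmk a b h1
  have hE := hind n hn5 hodd
  exact hE.false { toEmbedding := ⟨f, finj⟩, map_rel_iff' := fun {a b} => fadj a b }

end TwoCliquesAux

/-- A finite simple graph has no odd antiholes and no independent set of size 3 iff
its vertex set partitions into two cliques. -/
theorem no_odd_antiholes_no_indep_triple_iff_two_cliques {V : Type*} [Fintype V]
    (G : SimpleGraph V) :
    ((∀ n : ℕ, 5 ≤ n → Odd n → IsEmpty ((SimpleGraph.cycleGraph n)ᶜ ↪g G)) ∧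
      ¬∃ a b c : V, a ≠ b ∧ a ≠ c ∧ b ≠ c ∧ ¬G.Adj a b ∧ ¬G.Adj a c ∧ ¬G.Adj b c) ↔
    ∃ A : Set V, G.IsClique A ∧ G.IsClique Aᶜ := by
  classical
  constructor
  · rintro ⟨h1, h2⟩
    have htri : ∀ a b c : V, Gᶜ.Adj a b → Gᶜ.Adj a c → Gᶜ.Adj b c → False := by
      intro a b c hab hac hbc
      rw [SimpleGraph.compl_adj] at hab hac hbc
      exact h2 ⟨a, b, c, hab.1, hac.1, hbc.1, hab.2, hac.2, hbc.2⟩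
    have hind : ∀ n : ℕ, 5 ≤ n → Odd n → IsEmpty (SimpleGraph.cycleGraph n ↪g Gᶜ) := by
      intro n h5 hodd
      constructor
      intro f
      refine (h1 n h5 hodd).false ?_
      refine { toEmbedding := f.toEmbedding, map_rel_iff' := ?_ }
      intro a b
      have hiff := f.map_rel_iff (a := a) (b := b)
      constructor
      · intro hG
        rw [SimpleGraph.compl_adj]
        have hne : a ≠ b := by
          intro h; rw [h] at hG; exact G.irrefl hG
        refine ⟨hne, ?_⟩
        intro hcyc
        have hH : Gᶜ.Adj (f a) (f b) := hiff.mpr hcyc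
        rw [SimpleGraph.compl_adj] at hH
        exact hH.2 hG
      · intro hc
        rw [SimpleGraph.compl_adj] at hc
        by_contra hG
        have hne : f a ≠ f b := fun h => hc.1 (f.injective h)
        have hH : Gᶜ.Adj (f a) (f b) := by
          rw [SimpleGraph.compl_adj]; exact ⟨hne, hG⟩
        exact hc.2 (hiff.mp hH)
    have hnoodd := TwoCliquesAux.no_odd_closed htri hind
    have key : ∀ u v : V, Gᶜ.Adj u v →
        ((∃ q : Gᶜ.Walk ((Gᶜ.connectedComponentMk u).out) u, Even q.length) ↔
         (∃ q : Gᶜ.Walk ((Gᶜ.connectedComponentMk v).out) v, Even q.length)) → False := by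
      intro u v hadj hiff
      have hcomp : Gᶜ.connectedComponentMk u = Gᶜ.connectedComponentMk v :=
        SimpleGraph.ConnectedComponent.connectedComponentMk_eq_of_adj hadj
      have e : (Gᶜ.connectedComponentMk v).out = (Gᶜ.connectedComponentMk u).out := by
        rw [hcomp]
      have hru : Gᶜ.Reachable ((Gᶜ.connectedComponentMk u).out) u :=
        SimpleGraph.ConnectedComponent.exact (Quot.out_eq _)
      have hrv : Gᶜ.Reachable ((Gᶜ.connectedComponentMk v).out) v :=
        SimpleGraph.ConnectedComponent.exact (Quot.out_eq _)
      by_cases hu : ∃ q : Gᶜ.Walk ((Gᶜ.connectedComponentMk u).out) u, Even q.length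
      · obtain ⟨q1, hq1⟩ := hu
        obtain ⟨q2, hq2⟩ := hiff.mp ⟨q1, hq1⟩
        refine hnoodd _ (q1.append (SimpleGraph.Walk.cons hadj (q2.copy e rfl).reverse)) ?_
        rw [Nat.odd_iff]
        simp only [SimpleGraph.Walk.length_append, SimpleGraph.Walk.length_cons,
          SimpleGraph.Walk.length_reverse, SimpleGraph.Walk.length_copy]
        rw [Nat.even_iff] at hq1 hq2
        omega
      · have hv : ¬ ∃ q : Gᶜ.Walk ((Gᶜ.connectedComponentMk v).out) v, Even q.length :=
          fun h => hu (hiff.mpr h)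
        obtain ⟨q1⟩ := hru
        obtain ⟨q2⟩ := hrv
        have hq1 : ¬ Even q1.length := fun h => hu ⟨q1, h⟩
        have hq2 : ¬ Even q2.length := fun h => hv ⟨q2, h⟩
        refine hnoodd _ (q1.append (SimpleGraph.Walk.cons hadj (q2.copy e rfl).reverse)) ?_
        rw [Nat.odd_iff]
        simp only [SimpleGraph.Walk.length_append, SimpleGraph.Walk.length_cons,
          SimpleGraph.Walk.length_reverse, SimpleGraph.Walk.length_copy]
        rw [Nat.even_iff] at hq1 hq2
        omega
    refine ⟨{v : V | ∃ q : Gᶜ.Walk ((Gᶜ.connectedComponentMk v).out) v, Even q.length}, ?_, ?_⟩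
    · intro a ha b hb hne
      by_contra hnadj
      simp only [Set.mem_setOf_eq] at ha hb
      exact key a b ((G.compl_adj a b).mpr ⟨hne, hnadj⟩) (iff_of_true ha hb)
    · intro a ha b hb hne
      by_contra hnadj
      simp only [Set.mem_compl_iff, Set.mem_setOf_eq] at ha hb
      exact key a b ((G.compl_adj a b).mpr ⟨hne, hnadj⟩) (iff_of_false ha hb)
  · rintro ⟨A, hA, hAc⟩
    constructor
    · intro n h5 hodd
      haveI : NeZero n := ⟨by omega⟩
      have h2n : 2 ≤ n := by omega
      constructor
      intro f
      have key : ∀ a b : Fin n, (b - a).val = 1 → ((f a ∈ A) ↔ ¬ (f b ∈ A)) := by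
        intro a b h1
        have hne : a ≠ b := by
          intro h; rw [h, sub_self] at h1; simp at h1
        have hcyc : (SimpleGraph.cycleGraph n).Adj a b := by
          rw [SimpleGraph.cycleGraph_adj']; right; exact h1
        have hnadj : ¬ G.Adj (f a) (f b) := by
          intro hG
          have hcc := f.map_rel_iff.mp hG
          rw [SimpleGraph.compl_adj] at hcc
          exact hcc.2 hcyc
        have hfne : f a ≠ f b := fun h => hne (f.injective h)
        constructor
        · intro ha hb
          exact hnadj (hA ha hb hfne)
        · intro hnb
          by_contra hna
          exact hnadj (hAc hna hnb hfne)
      have hone : ((1 : Fin n)).val = 1 := by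
        rw [Fin.val_one']
        exact Nat.mod_eq_of_lt (by omega)
      have step : ∀ k : ℕ, ((f (k : Fin n) ∈ A) ↔ ¬ (f ((k + 1 : ℕ) : Fin n) ∈ A)) := by
        intro k
        have hc : ((k + 1 : ℕ) : Fin n) = (k : Fin n) + 1 := by push_cast; ring
        have hsub : (((k : Fin n) + 1) - (k : Fin n)).val = 1 := by
          rw [add_sub_cancel_left, hone]
        rw [hc]
        exact key (k : Fin n) ((k : Fin n) + 1) hsub
      have alt : ∀ k : ℕ, ((f (k : Fin n) ∈ A) ↔ (Even k ↔ f ((0 : ℕ) : Fin n) ∈ A)) := by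
        intro k
        induction k with
        | zero => simp
        | succ k ih =>
          have hs := step k
          have hpar : Even (k + 1) ↔ ¬ Even k := Nat.even_add_one
          tauto
      have hdn := alt n
      have heven : ¬ Even n := Nat.not_even_iff_odd.mpr hodd
      rw [Fin.natCast_self] at hdn
      have h00 : ((0 : ℕ) : Fin n) = 0 := Nat.cast_zero
      rw [h00] at hdn
      tauto
    · rintro ⟨a, b, c, hab, hac, hbc, nab, nac, nbc⟩
      by_cases ha : a ∈ A <;> by_cases hb : b ∈ A <;> by_cases hc : c ∈ A
      all_goals first
        | exact nab (hA ha hb hab)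
        | exact nac (hA ha hc hac)
        | exact nbc (hA hb hc hbc)
        | exact nab (hAc ha hb hab)
        | exact nac (hAc ha hc hac)
        | exact nbc (hAc hb hc hbc)
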